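/- Let η be the Minkowski bilinear form on ℝ^{n+1}, η(x, y) = −x₀y₀ + Σ_{i=1}^{n} xᵢyᵢ. Fix a, γ ∈ ℝ^{n+1}, β ∈ ℝ, and a linear map B : ℝ^{n+1} → ℝ^{n+1} with η(Bu, v) = −η(u, Bv) for all u, v. Define the conformal vector field V̄(x) = (η(a, x) + β)·x − (1/2)η(x, x)·a + Bx + (1/2)γ and its angle function C(x) = η(V̄(x), x) on the hyperboloid. Then for every x ∈ ℝ^{n+1} with η(x, x) = −1: C(x) = −β + (1/2)·η(γ − a, x). (Hence the angle function of a conformal field of Lorentz space restricted to the hyperboloid model of ℍ^n is, up to an additive constant, a height function, and is therefore a special scalar concircular field, as asserted by Proposition 4.1 of the paper.) -/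
import Mathlib


/-- The angle function of a conformal vector field of Lorentz space restricted to the
hyperboloid model of `ℍ^n` is, up to an additive constant, a height function:
`C(x) = −β + (1/2)η(γ − a, x)` (cf. Proposition 4.1 of the paper). -/
theorem angle_function_hyperboloid_is_height (n : ℕ)
    (η : (Fin (n + 1) → ℝ) → (Fin (n + 1) → ℝ) → ℝ)
    (hη : ∀ x y, η x y = -(x 0 * y 0) + ∑ i : Fin n, x i.succ * y i.succ)
    (a γ : Fin (n + 1) → ℝ) (β : ℝ)
    (B : (Fin (n + 1) → ℝ) →ₗ[ℝ] (Fin (n + 1) → ℝ))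
    (hB : ∀ u v, η (B u) v = -η u (B v))
    (Vbar : (Fin (n + 1) → ℝ) → (Fin (n + 1) → ℝ))
    (hVbar : ∀ x, Vbar x =
      (η a x + β) • x - ((1 / 2 : ℝ) * η x x) • a + B x + (1 / 2 : ℝ) • γ)
    (C : (Fin (n + 1) → ℝ) → ℝ) (hC : ∀ x, C x = η (Vbar x) x) :
    ∀ x : Fin (n + 1) → ℝ, η x x = -1 →
      C x = -β + (1 / 2 : ℝ) * η (γ - a) x := by
  have hsym : ∀ u v, η u v = η v u := by
    intro u v; simp only [hη, mul_comm]
  have hadd : ∀ u v w, η (u + v) w = η u w + η v w := by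
    intro u v w
    simp only [hη, Pi.add_apply, add_mul, Finset.sum_add_distrib]
    ring
  have hsmul : ∀ (c : ℝ) u w, η (c • u) w = c * η u w := by
    intro c u w
    simp only [hη, Pi.smul_apply, smul_eq_mul, Finset.mul_sum, mul_add]
    ring_nf
  have hsub : ∀ u v w, η (u - v) w = η u w - η v w := by
    intro u v w
    have := hadd (u - v) v w
    rw [sub_add_cancel] at this
    linarith
  intro x hx
  have hBx : η (B x) x = 0 := by
    have h1 := hB x x
    have h2 := hsym x (B x)
    linarith
  rw [hC x, hVbar x, hadd, hadd, hsub, hsmul, hsmul, hsmul, hx, hBx, hsub]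
  ring
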